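/- Let Y be real symmetric positive definite N×N, let Υ ∈ ℝ^{1×N} be a nonzero row vector, let U₁ be a unitary matrix whose first column is Y^{1/2}Υᵀ/‖Y^{1/2}Υᵀ‖, let U₂ be a unitary matrix whose first column is (1/√N)(1,…,1)ᵀ, and let Λ = i·diag(α₁,…,α_N) with α₁,…,α_N distinct reals. Set Q = Y^{-1/2}U₁U₂†ΛU₂U₁†Y^{1/2} and P = Υᵀ. Then rank([P, QP, …, Q^{N−1}P]) = N. -/

import Mathlib

open Matrix

/-- with U₁ having first column Y^{1/2}Υᵀ/‖Y^{1/2}Υᵀ‖, U₂ having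
    constant first column 1/√N, and Λ = i diag(α) with distinct α, the pair
    (Q, P) = (Y^{-1/2}U₁U₂†ΛU₂U₁†Y^{1/2}, Υᵀ) is controllable. -/
theorem stmt12 (N : ℕ) (hN : 0 < N)
    (Y Ysq : Matrix (Fin N) (Fin N) ℝ)
    (hY : Y.IsSymm) (hYpd : Y.PosDef)
    (hYsqPD : Ysq.PosDef) (hYsqSym : Ysq.IsSymm) (hYsq : Ysq * Ysq = Y)
    (Υ : Fin N → ℝ) (hΥ : Υ ≠ 0)
    (nrm : ℝ) (hnrm : nrm = Real.sqrt (∑ i, (Ysq.mulVec Υ i) ^ 2))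
    (U₁ U₂ : Matrix (Fin N) (Fin N) ℂ)
    (hU₁ : U₁ ∈ Matrix.unitaryGroup (Fin N) ℂ)
    (hU₂ : U₂ ∈ Matrix.unitaryGroup (Fin N) ℂ)
    (hU₁col : ∀ i, U₁ i ⟨0, hN⟩ = ((Ysq.mulVec Υ i / nrm : ℝ) : ℂ))
    (hU₂col : ∀ i, U₂ i ⟨0, hN⟩ = ((1 / Real.sqrt N : ℝ) : ℂ))
    (α : Fin N → ℝ) (hα : Function.Injective α)
    (Λ : Matrix (Fin N) (Fin N) ℂ)
    (hΛ : Λ = Matrix.diagonal (fun j => Complex.I * (α j : ℝ)))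
    (Q : Matrix (Fin N) (Fin N) ℂ)
    (hQ : Q = (Ysq⁻¹).map (fun a => (a : ℂ)) * (U₁ * U₂ᴴ * Λ * U₂ * U₁ᴴ) *
              Ysq.map (fun a => (a : ℂ)))
    (P : Fin N → ℂ) (hP : P = fun i => ((Υ i : ℝ) : ℂ))
    (Ctrb : Matrix (Fin N) (Fin N) ℂ)
    (hCtrb : Ctrb = Matrix.of fun i j => (Q ^ (j.val)).mulVec P i) :
    Ctrb.rank = N := by
  -- basic notation
  set Ysqℂ : Matrix (Fin N) (Fin N) ℂ := Ysq.map (fun a => (a : ℂ)) with hYsqℂ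
  set Ysqℂ' : Matrix (Fin N) (Fin N) ℂ := (Ysq⁻¹).map (fun a => (a : ℂ)) with hYsqℂ'
  have z0 : Fin N := ⟨0, hN⟩
  -- nrm is positive
  have hsum : ∑ i, (Ysq.mulVec Υ i) ^ 2 = Υ ⬝ᵥ Y.mulVec Υ := by
    have h1 : ∑ i, (Ysq.mulVec Υ i) ^ 2 = (Ysq.mulVec Υ) ⬝ᵥ (Ysq.mulVec Υ) := by
      simp [dotProduct, sq]
    rw [h1, Matrix.dotProduct_mulVec]
    have h2 : (Ysq.mulVec Υ) ᵥ* Ysq = Y.mulVec Υ := by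
      rw [← Matrix.mulVec_transpose, hYsqSym.eq, Matrix.mulVec_mulVec, hYsq]
    rw [h2, dotProduct_comm]
  have hpos : 0 < Υ ⬝ᵥ Y.mulVec Υ := by
    have := hYpd.dotProduct_mulVec_pos hΥ
    simpa using this
  have hnrm_pos : 0 < nrm := by
    rw [hnrm, hsum]; exact Real.sqrt_pos.mpr hpos
  have hnrm_ne : nrm ≠ 0 := ne_of_gt hnrm_pos
  have hsqN_pos : 0 < Real.sqrt N := Real.sqrt_pos.mpr (by exact_mod_cast hN)
  -- unitarity facts
  have hU₁l : U₁ᴴ * U₁ = 1 := by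
    simpa [Matrix.star_eq_conjTranspose] using (Unitary.mem_iff.mp hU₁).1
  have hU₁r : U₁ * U₁ᴴ = 1 := by
    simpa [Matrix.star_eq_conjTranspose] using (Unitary.mem_iff.mp hU₁).2
  have hU₂l : U₂ᴴ * U₂ = 1 := by
    simpa [Matrix.star_eq_conjTranspose] using (Unitary.mem_iff.mp hU₂).1
  have hU₂r : U₂ * U₂ᴴ = 1 := by
    simpa [Matrix.star_eq_conjTranspose] using (Unitary.mem_iff.mp hU₂).2
  -- Ysqℂ facts
  have hdetYsq : Ysq.det ≠ 0 := ne_of_gt hYsqPD.det_pos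
  have hYsqUnit : IsUnit Ysq.det := isUnit_iff_ne_zero.mpr hdetYsq
  have hmap_mul : ∀ (A B : Matrix (Fin N) (Fin N) ℝ),
      (A * B).map (fun a => (a : ℂ)) =
      A.map (fun a => (a : ℂ)) * B.map (fun a => (a : ℂ)) := by
    intro A B
    exact Matrix.map_mul (f := Complex.ofRealHom)
  have hmap_one : ((1 : Matrix (Fin N) (Fin N) ℝ).map (fun a => (a : ℂ))) = 1 := by
    exact Matrix.map_one _ (by simp) (by simp)
  have hinvl : Ysqℂ' * Ysqℂ = 1 := by
    rw [hYsqℂ, hYsqℂ', ← hmap_mul, Matrix.nonsing_inv_mul _ hYsqUnit, hmap_one]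
  have hinvr : Ysqℂ * Ysqℂ' = 1 := by
    rw [hYsqℂ, hYsqℂ', ← hmap_mul, Matrix.mul_nonsing_inv _ hYsqUnit, hmap_one]
  -- the conjugating matrices
  set A : Matrix (Fin N) (Fin N) ℂ := Ysqℂ' * U₁ * U₂ᴴ with hA
  set B : Matrix (Fin N) (Fin N) ℂ := U₂ * U₁ᴴ * Ysqℂ with hB
  have hAB : A * B = 1 := by
    rw [hA, hB]
    calc Ysqℂ' * U₁ * U₂ᴴ * (U₂ * U₁ᴴ * Ysqℂ)
        = Ysqℂ' * U₁ * (U₂ᴴ * U₂) * U₁ᴴ * Ysqℂ := by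
          simp only [Matrix.mul_assoc]
      _ = Ysqℂ' * (U₁ * U₁ᴴ) * Ysqℂ := by rw [hU₂l]; simp only [Matrix.mul_assoc, Matrix.one_mul]
      _ = Ysqℂ' * Ysqℂ := by rw [hU₁r, Matrix.mul_one]
      _ = 1 := hinvl
  have hBA : B * A = 1 := by
    rw [hA, hB]
    calc U₂ * U₁ᴴ * Ysqℂ * (Ysqℂ' * U₁ * U₂ᴴ)
        = U₂ * U₁ᴴ * (Ysqℂ * Ysqℂ') * U₁ * U₂ᴴ := by
          simp only [Matrix.mul_assoc]
      _ = U₂ * (U₁ᴴ * U₁) * U₂ᴴ := by rw [hinvr]; simp only [Matrix.mul_assoc, Matrix.one_mul, Matrix.mul_one]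
      _ = U₂ * U₂ᴴ := by rw [hU₁l, Matrix.mul_one]
      _ = 1 := hU₂r
  have hQ' : Q = A * Λ * B := by
    rw [hQ, hA, hB]; simp only [Matrix.mul_assoc]
  have hQpow : ∀ j : ℕ, Q ^ j = A * Λ ^ j * B := by
    intro j
    induction j with
    | zero => rw [pow_zero, pow_zero, Matrix.mul_one, hAB]
    | succ k ih =>
        rw [pow_succ, ih, hQ', pow_succ]
        calc A * Λ ^ k * B * (A * Λ * B)
            = A * Λ ^ k * (B * A) * (Λ * B) := by simp only [Matrix.mul_assoc]
          _ = A * Λ ^ k * (Λ * B) := by rw [hBA, Matrix.mul_one]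
          _ = A * (Λ ^ k * Λ) * B := by simp only [Matrix.mul_assoc]
  -- compute B *ᵥ P
  have hstep1 : Ysqℂ.mulVec P = fun i => ((Ysq.mulVec Υ i : ℝ) : ℂ) := by
    funext i
    simp only [hYsqℂ, Matrix.mulVec, dotProduct, hP, Matrix.map_apply]
    push_cast
    rfl
  have hvcol : ∀ j, ((Ysq.mulVec Υ j : ℝ) : ℂ) = (nrm : ℂ) * U₁ j ⟨0, hN⟩ := by
    intro j
    rw [hU₁col j, ← Complex.ofReal_mul]
    congr 1
    rw [mul_comm, div_mul_cancel₀ _ hnrm_ne]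
  have hstep2 : U₁ᴴ.mulVec (fun i => ((Ysq.mulVec Υ i : ℝ) : ℂ)) =
      fun i => if i = ⟨0, hN⟩ then (nrm : ℂ) else 0 := by
    have hw : (fun i => ((Ysq.mulVec Υ i : ℝ) : ℂ)) = fun j => (nrm : ℂ) * U₁ j ⟨0, hN⟩ :=
      funext hvcol
    rw [hw]
    funext i
    have : (U₁ᴴ.mulVec (fun j => (nrm : ℂ) * U₁ j ⟨0, hN⟩)) i
        = (nrm : ℂ) * (U₁ᴴ * U₁) i ⟨0, hN⟩ := by
      simp only [Matrix.mulVec, dotProduct, Matrix.mul_apply,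
        Matrix.conjTranspose_apply, Finset.mul_sum]
      exact Finset.sum_congr rfl fun j _ => by ring
    rw [this, hU₁l, Matrix.one_apply]
    split <;> simp
  have hstep3 : U₂.mulVec (fun i => if i = ⟨0, hN⟩ then (nrm : ℂ) else 0) =
      fun _ => ((nrm / Real.sqrt N : ℝ) : ℂ) := by
    funext i
    simp only [Matrix.mulVec, dotProduct, mul_ite, mul_zero]
    rw [Finset.sum_ite_eq' _ (⟨0, hN⟩ : Fin N)]
    simp [hU₂col i]
    push_cast
    ring
  have hBP : B.mulVec P = fun _ => ((nrm / Real.sqrt N : ℝ) : ℂ) := by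
    rw [hB, ← Matrix.mulVec_mulVec, ← Matrix.mulVec_mulVec, hstep1, hstep2, hstep3]
  -- the controllability matrix factorizes
  set c : ℂ := ((nrm / Real.sqrt N : ℝ) : ℂ) with hc
  set V : Matrix (Fin N) (Fin N) ℂ := Matrix.vandermonde (fun k => Complex.I * (α k : ℝ)) with hV
  have hfact : Ctrb = A * (V * Matrix.diagonal (fun _ => c)) := by
    rw [hCtrb]
    ext i j
    rw [Matrix.of_apply, hQpow j.val, ← Matrix.mulVec_mulVec, ← Matrix.mulVec_mulVec, hBP]
    have hΛpow : Λ ^ (j : ℕ) =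
        Matrix.diagonal (fun k => (Complex.I * (α k : ℝ)) ^ (j : ℕ)) := by
      rw [hΛ, Matrix.diagonal_pow]
      rfl
    rw [hΛpow]
    have hd : (Matrix.diagonal (fun k => (Complex.I * (α k : ℝ)) ^ (j : ℕ))).mulVec
        (fun _ => c) = fun k => (Complex.I * (α k : ℝ)) ^ (j : ℕ) * c := by
      funext k; exact Matrix.mulVec_diagonal _ _ _
    rw [hd]
    rw [Matrix.mul_apply]
    simp only [Matrix.mulVec, dotProduct]
    refine Finset.sum_congr rfl fun k _ => ?_
    rw [Matrix.mul_diagonal]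
    simp only [hV, Matrix.vandermonde, Matrix.of_apply]
  -- everything is invertible
  have hAunit : IsUnit A := ⟨⟨A, B, hAB, hBA⟩, rfl⟩
  have hc_ne : c ≠ 0 := by
    rw [hc]
    simp only [ne_eq, Complex.ofReal_eq_zero]
    exact div_ne_zero hnrm_ne (ne_of_gt hsqN_pos)
  have hVdet : V.det ≠ 0 := by
    rw [hV]
    rw [Matrix.det_vandermonde_ne_zero_iff]
    intro a b hab
    apply hα
    have := mul_left_cancel₀ Complex.I_ne_zero hab
    exact_mod_cast this
  have hWdet : (V * Matrix.diagonal (fun _ => c)).det ≠ 0 := by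
    rw [Matrix.det_mul, Matrix.det_diagonal]
    exact mul_ne_zero hVdet (Finset.prod_ne_zero_iff.mpr fun _ _ => hc_ne)
  have hCunit : IsUnit Ctrb := by
    rw [hfact]
    exact hAunit.mul ((Matrix.isUnit_iff_isUnit_det _).mpr (isUnit_iff_ne_zero.mpr hWdet))
  rw [Matrix.rank_of_isUnit Ctrb hCunit]
  simp
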